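/- Let N ≥ 1 and let ε, σ > 0 satisfy εσ < 1. Let 𝒦₁ ⊆ [0,∞) × ℝ^N be a closed tube, let L ⊆ ℝ × ℝ^N be nonempty and closed, and let s₁ ≥ 0 be such that: (a) d^σ_L(τ, z) ≥ ε e^{−τ} for every (τ, z) ∈ 𝒦₁ with τ ≤ s₁; (b) there exists y ∈ 𝒦₁(s₁) with d^σ_L(s₁, y) = ε e^{−s₁}. Define 𝒦 := {(s, y) ∈ [0,∞) × ℝ^N : there exists (τ, z) ∈ 𝒦₁ with τ ≤ s₁ and ‖(s, y) − (τ, z)‖_σ ≤ ε(e^{−τ} − e^{−s₁})}. Then 𝒦 is closed, 𝒦(s₁) = 𝒦₁(s₁), and e(𝒦, L) = ε e^{−s₁}; moreover there exist y₁ ∈ 𝒦(s₁) and (s₂, y₂) ∈ L with ‖(s₁, y₁) − (s₂, y₂)‖_σ = ε e^{−s₁}. -/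

import Mathlib

open Metric Set

/-- The norm `‖(t,x)‖_σ = sqrt(t²/σ² + ‖x‖²)` on `ℝ × ℝ^N`. -/
noncomputable def snormS {N : ℕ} (σ : ℝ) (p : ℝ × EuclideanSpace ℝ (Fin N)) : ℝ :=
  Real.sqrt (p.1 ^ 2 / σ ^ 2 + ‖p.2‖ ^ 2)

/-- The distance function `d^σ_E(p) = inf {‖q - p‖_σ : q ∈ E}`. -/
noncomputable def distS {N : ℕ} (σ : ℝ) (E : Set (ℝ × EuclideanSpace ℝ (Fin N)))
    (p : ℝ × EuclideanSpace ℝ (Fin N)) : ℝ :=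
  sInf {r | ∃ q ∈ E, r = snormS σ (q - p)}

/-- The minimal distance `e(A,B) = inf {‖p - q‖_σ : p ∈ A, q ∈ B}`. -/
noncomputable def eS {N : ℕ} (σ : ℝ) (A B : Set (ℝ × EuclideanSpace ℝ (Fin N))) : ℝ :=
  sInf {r | ∃ p ∈ A, ∃ q ∈ B, r = snormS σ (p - q)}

lemma snormS_nonneg {N : ℕ} (σ : ℝ) (v : ℝ × EuclideanSpace ℝ (Fin N)) : 0 ≤ snormS σ v :=
  Real.sqrt_nonneg _

lemma snormS_neg {N : ℕ} (σ : ℝ) (v : ℝ × EuclideanSpace ℝ (Fin N)) :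
    snormS σ (-v) = snormS σ v := by
  simp [snormS]

lemma snormS_sub_comm {N : ℕ} (σ : ℝ) (u v : ℝ × EuclideanSpace ℝ (Fin N)) :
    snormS σ (u - v) = snormS σ (v - u) := by
  rw [← snormS_neg σ (v - u), neg_sub]

lemma snormS_zero {N : ℕ} (σ : ℝ) : snormS (N := N) σ 0 = 0 := by
  simp [snormS]

lemma snormS_continuous {N : ℕ} (σ : ℝ) : Continuous (snormS (N := N) σ) := by
  apply Real.continuous_sqrt.comp
  fun_prop

lemma abs_fst_le_snormS {N : ℕ} {σ : ℝ} (hσ : 0 < σ) (v : ℝ × EuclideanSpace ℝ (Fin N)) :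
    |v.1| ≤ σ * snormS σ v := by
  have h1 : Real.sqrt (v.1 ^ 2 / σ ^ 2) ≤ snormS σ v := by
    apply Real.sqrt_le_sqrt; nlinarith [sq_nonneg ‖v.2‖]
  have h2 : Real.sqrt (v.1 ^ 2 / σ ^ 2) = |v.1| / σ := by
    rw [show v.1 ^ 2 / σ ^ 2 = (v.1 / σ) ^ 2 by ring, Real.sqrt_sq_eq_abs, abs_div,
      abs_of_pos hσ]
  rw [h2] at h1
  calc |v.1| = σ * (|v.1| / σ) := by field_simp
  _ ≤ σ * snormS σ v := by nlinarith

lemma norm_snd_le_snormS {N : ℕ} {σ : ℝ} (hσ : 0 < σ) (v : ℝ × EuclideanSpace ℝ (Fin N)) :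
    ‖v.2‖ ≤ snormS σ v := by
  rw [show ‖v.2‖ = Real.sqrt (‖v.2‖ ^ 2) from (Real.sqrt_sq (norm_nonneg _)).symm]
  apply Real.sqrt_le_sqrt
  have : 0 ≤ v.1 ^ 2 / σ ^ 2 := by positivity
  linarith

lemma snormS_eq_zero {N : ℕ} {σ : ℝ} (hσ : 0 < σ) {v : ℝ × EuclideanSpace ℝ (Fin N)}
    (h : snormS σ v = 0) : v = 0 := by
  have hle : v.1 ^ 2 / σ ^ 2 + ‖v.2‖ ^ 2 ≤ 0 := Real.sqrt_eq_zero'.mp h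
  have h1 : 0 ≤ v.1 ^ 2 / σ ^ 2 := by positivity
  have h2 : 0 ≤ ‖v.2‖ ^ 2 := by positivity
  have hv1 : v.1 = 0 := by
    have h3 : v.1 ^ 2 / σ ^ 2 = 0 := by linarith
    have hσ2 : σ ^ 2 ≠ 0 := by positivity
    field_simp at h3
    simpa using h3
  have hv2 : v.2 = 0 := by
    have h3 : ‖v.2‖ ^ 2 = 0 := by linarith
    have : ‖v.2‖ = 0 := by nlinarith [norm_nonneg v.2]
    exact norm_eq_zero.mp this
  exact Prod.ext hv1 hv2

lemma l2_triangle (a b c d : ℝ) :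
    Real.sqrt ((a + c) ^ 2 + (b + d) ^ 2) ≤ Real.sqrt (a ^ 2 + b ^ 2) + Real.sqrt (c ^ 2 + d ^ 2) := by
  set s1 := Real.sqrt (a ^ 2 + b ^ 2) with hs1
  set s2 := Real.sqrt (c ^ 2 + d ^ 2) with hs2
  have h1 : s1 ^ 2 = a ^ 2 + b ^ 2 := Real.sq_sqrt (by positivity)
  have h2 : s2 ^ 2 = c ^ 2 + d ^ 2 := Real.sq_sqrt (by positivity)
  have h3 : 0 ≤ s1 := Real.sqrt_nonneg _
  have h4 : 0 ≤ s2 := Real.sqrt_nonneg _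
  have key : a * c + b * d ≤ s1 * s2 := by
    rw [hs1, hs2, ← Real.sqrt_mul (by positivity)]
    rcases le_or_gt (a * c + b * d) 0 with h | h
    · exact h.trans (Real.sqrt_nonneg _)
    · rw [show a * c + b * d = Real.sqrt ((a * c + b * d) ^ 2) from (Real.sqrt_sq h.le).symm]
      apply Real.sqrt_le_sqrt; nlinarith [sq_nonneg (a * d - b * c)]
  have hsum : (a + c) ^ 2 + (b + d) ^ 2 ≤ (s1 + s2) ^ 2 := by nlinarith
  calc Real.sqrt ((a + c) ^ 2 + (b + d) ^ 2) ≤ Real.sqrt ((s1 + s2) ^ 2) :=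
        Real.sqrt_le_sqrt hsum
    _ = s1 + s2 := Real.sqrt_sq (by positivity)

lemma snormS_add_le {N : ℕ} {σ : ℝ} (hσ : 0 < σ) (u v : ℝ × EuclideanSpace ℝ (Fin N)) :
    snormS σ (u + v) ≤ snormS σ u + snormS σ v := by
  have hσ' : σ ≠ 0 := hσ.ne'
  have e1 : snormS σ (u + v) = Real.sqrt ((u.1/σ + v.1/σ) ^ 2 + ‖u.2 + v.2‖ ^ 2) := by
    unfold snormS
    rw [show ((u + v).1) = u.1 + v.1 from rfl, show ((u + v).2) = u.2 + v.2 from rfl]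
    congr 1
    field_simp
  have e2 : snormS σ u = Real.sqrt ((u.1/σ) ^ 2 + ‖u.2‖ ^ 2) := by
    unfold snormS; congr 1; field_simp
  have e3 : snormS σ v = Real.sqrt ((v.1/σ) ^ 2 + ‖v.2‖ ^ 2) := by
    unfold snormS; congr 1; field_simp
  rw [e1, e2, e3]
  calc Real.sqrt ((u.1/σ + v.1/σ) ^ 2 + ‖u.2 + v.2‖ ^ 2)
      ≤ Real.sqrt ((u.1/σ + v.1/σ) ^ 2 + (‖u.2‖ + ‖v.2‖) ^ 2) := by
        apply Real.sqrt_le_sqrt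
        have := norm_add_le u.2 v.2
        nlinarith [norm_nonneg (u.2 + v.2), norm_nonneg u.2, norm_nonneg v.2]
    _ ≤ _ := l2_triangle _ _ _ _

lemma distS_bddBelow {N : ℕ} (σ : ℝ) (E : Set (ℝ × EuclideanSpace ℝ (Fin N))) (p) :
    BddBelow {r | ∃ q ∈ E, r = snormS σ (q - p)} :=
  ⟨0, fun _ ⟨_, _, hr⟩ => hr ▸ snormS_nonneg σ _⟩

lemma distS_le {N : ℕ} (σ : ℝ) {E : Set (ℝ × EuclideanSpace ℝ (Fin N))} {q} (hq : q ∈ E) (p) :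
    distS σ E p ≤ snormS σ (q - p) :=
  csInf_le (distS_bddBelow σ E p) ⟨q, hq, rfl⟩

lemma le_distS {N : ℕ} (σ : ℝ) {E : Set (ℝ × EuclideanSpace ℝ (Fin N))} (hE : E.Nonempty)
    {c : ℝ} (p) (h : ∀ q ∈ E, c ≤ snormS σ (q - p)) : c ≤ distS σ E p := by
  apply le_csInf
  · obtain ⟨q, hq⟩ := hE; exact ⟨_, q, hq, rfl⟩
  · rintro r ⟨q, hq, rfl⟩; exact h q hq

lemma distS_nonneg {N : ℕ} (σ : ℝ) {E : Set (ℝ × EuclideanSpace ℝ (Fin N))} (hE : E.Nonempty)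
    (p) : 0 ≤ distS σ E p :=
  le_distS σ hE p fun q _ => snormS_nonneg σ _

/-- A set on which `snormS σ (· - p)` is bounded is bounded. -/
lemma bounded_of_snormS_le {N : ℕ} {σ : ℝ} (hσ : 0 < σ) (p : ℝ × EuclideanSpace ℝ (Fin N))
    (R : ℝ) : Bornology.IsBounded {q : ℝ × EuclideanSpace ℝ (Fin N) | snormS σ (q - p) ≤ R} := by
  apply (Metric.isBounded_iff_subset_closedBall p).mpr
  refine ⟨(σ + 1) * |R|, fun q hq => ?_⟩
  simp only [Metric.mem_closedBall]
  have h1 := abs_fst_le_snormS hσ (q - p)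
  have h2 := norm_snd_le_snormS hσ (q - p)
  have hq' : snormS σ (q - p) ≤ |R| := hq.trans (le_abs_self R)
  have hs := snormS_nonneg σ (q - p)
  rw [Prod.dist_eq, sup_le_iff]
  constructor
  · rw [Real.dist_eq]
    calc |q.1 - p.1| = |(q - p).1| := rfl
      _ ≤ σ * snormS σ (q - p) := h1
      _ ≤ (σ + 1) * |R| := by nlinarith
  · rw [dist_eq_norm]
    calc ‖q.2 - p.2‖ = ‖(q - p).2‖ := rfl
      _ ≤ snormS σ (q - p) := h2
      _ ≤ (σ + 1) * |R| := by nlinarith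

lemma distS_exists_min {N : ℕ} {σ : ℝ} (hσ : 0 < σ) {L : Set (ℝ × EuclideanSpace ℝ (Fin N))}
    (hLne : L.Nonempty) (hLcl : IsClosed L) (p : ℝ × EuclideanSpace ℝ (Fin N)) :
    ∃ q ∈ L, snormS σ (q - p) = distS σ L p := by
  set d := distS σ L p with hd
  have hd0 : 0 ≤ d := distS_nonneg σ hLne p
  have hlt : ∃ r ∈ {r | ∃ q ∈ L, r = snormS σ (q - p)}, r < d + 1 := by
    apply exists_lt_of_csInf_lt
    · obtain ⟨q, hq⟩ := hLne; exact ⟨_, q, hq, rfl⟩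
    · change distS σ L p < d + 1; linarith
  obtain ⟨r, ⟨q₀, hq₀, rfl⟩, hr⟩ := hlt
  set C := L ∩ {q | snormS σ (q - p) ≤ d + 1} with hC
  have hCcl : IsClosed C :=
    hLcl.inter (isClosed_le ((snormS_continuous σ).comp (continuous_id.sub continuous_const))
      continuous_const)
  have hCcpt : IsCompact C := by
    apply Metric.isCompact_of_isClosed_isBounded hCcl
    exact (bounded_of_snormS_le hσ p (d + 1)).subset (fun q hq => hq.2)
  have hCne : C.Nonempty := ⟨q₀, hq₀, hr.le⟩
  obtain ⟨q', hq'C, hmin⟩ := hCcpt.exists_isMinOn hCne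
    (((snormS_continuous σ).comp (continuous_id.sub continuous_const)).continuousOn)
  have hmin' : ∀ x ∈ C, snormS σ (q' - p) ≤ snormS σ (x - p) := fun x hx =>
    isMinOn_iff.mp hmin x hx
  refine ⟨q', hq'C.1, le_antisymm ?_ (csInf_le (distS_bddBelow σ L p) ⟨q', hq'C.1, rfl⟩)⟩
  refine le_csInf ⟨snormS σ (q₀ - p), q₀, hq₀, rfl⟩ ?_
  rintro r ⟨q, hq, rfl⟩
  rcases le_or_gt (snormS σ (q - p)) (d + 1) with h | h
  · exact hmin' q ⟨hq, h⟩
  · exact (hq'C.2).trans h.le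

lemma exp_sub_exp_le (a b : ℝ) (hab : a ≤ b) (ha : 0 ≤ a) :
    Real.exp (-a) - Real.exp (-b) ≤ b - a := by
  have h1 := Real.add_one_le_exp (a - b)
  have h2 : Real.exp (-b) = Real.exp (a - b) * Real.exp (-a) := by
    rw [← Real.exp_add]; ring_nf
  have h3 : Real.exp (-a) ≤ 1 := Real.exp_le_one_iff.mpr (by linarith)
  nlinarith [Real.exp_pos (-a)]

theorem stmt11 (N : ℕ) (hN : 1 ≤ N) (ε σ : ℝ) (hε : 0 < ε) (hσ : 0 < σ) (hεσ : ε * σ < 1)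
    (K₁ : Set (ℝ × EuclideanSpace ℝ (Fin N)))
    (hK₁sub : ∀ p ∈ K₁, 0 ≤ p.1) (hK₁cl : IsClosed K₁)
    (hK₁tube : ∀ t : ℝ, IsCompact (K₁ ∩ {p | p.1 ≤ t}))
    (L : Set (ℝ × EuclideanSpace ℝ (Fin N))) (hLne : L.Nonempty) (hLcl : IsClosed L)
    (s₁ : ℝ) (hs₁ : 0 ≤ s₁)
    (ha : ∀ p ∈ K₁, p.1 ≤ s₁ → ε * Real.exp (-p.1) ≤ distS σ L p)
    (hb : ∃ y, (s₁, y) ∈ K₁ ∧ distS σ L (s₁, y) = ε * Real.exp (-s₁))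
    (K : Set (ℝ × EuclideanSpace ℝ (Fin N)))
    (hK : K = {p | 0 ≤ p.1 ∧ ∃ q ∈ K₁, q.1 ≤ s₁ ∧
        snormS σ (p - q) ≤ ε * (Real.exp (-q.1) - Real.exp (-s₁))}) :
    IsClosed K ∧
    {x | (s₁, x) ∈ K} = {x | (s₁, x) ∈ K₁} ∧
    eS σ K L = ε * Real.exp (-s₁) ∧
    ∃ y₁, (s₁, y₁) ∈ K ∧ ∃ q ∈ L, snormS σ ((s₁, y₁) - q) = ε * Real.exp (-s₁) := by
  obtain ⟨y, hyK₁, hyd⟩ := hb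
  -- K₁ slice at s₁ is inside K
  have hsliceK : ∀ x, (s₁, x) ∈ K₁ → (s₁, x) ∈ K := by
    intro x hx
    rw [hK]
    refine ⟨hs₁, (s₁, x), hx, le_refl _, ?_⟩
    simp [sub_self, snormS_zero]
  have hyK : (s₁, y) ∈ K := hsliceK y hyK₁
  -- Part 1: K is closed
  have part1 : IsClosed K := by
    set D : Set ((ℝ × EuclideanSpace ℝ (Fin N)) × (ℝ × EuclideanSpace ℝ (Fin N))) :=
      {qp | qp.1 ∈ K₁ ∧ qp.1.1 ≤ s₁ ∧
        snormS σ (qp.2 - qp.1) ≤ ε * (Real.exp (-qp.1.1) - Real.exp (-s₁))} with hD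
    have hDcl : IsClosed D := by
      have h1 : IsClosed {qp : (ℝ × EuclideanSpace ℝ (Fin N)) × (ℝ × EuclideanSpace ℝ (Fin N)) |
          qp.1 ∈ K₁} := hK₁cl.preimage continuous_fst
      have h2 : IsClosed {qp : (ℝ × EuclideanSpace ℝ (Fin N)) × (ℝ × EuclideanSpace ℝ (Fin N)) |
          qp.1.1 ≤ s₁} := isClosed_le (by fun_prop) continuous_const
      have h3 : IsClosed {qp : (ℝ × EuclideanSpace ℝ (Fin N)) × (ℝ × EuclideanSpace ℝ (Fin N)) |
          snormS σ (qp.2 - qp.1) ≤ ε * (Real.exp (-qp.1.1) - Real.exp (-s₁))} :=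
        isClosed_le ((snormS_continuous σ).comp (continuous_snd.sub continuous_fst)) (by fun_prop)
      exact h1.inter (h2.inter h3)
    have hDbd : Bornology.IsBounded D := by
      obtain ⟨R, hR⟩ := (Metric.isBounded_iff_subset_closedBall 0).mp
        (hK₁tube s₁).isBounded
      have key : ∀ qp ∈ D, qp.1 ∈ closedBall (0 : ℝ × EuclideanSpace ℝ (Fin N)) R ∧
          qp.2 ∈ closedBall (0 : ℝ × EuclideanSpace ℝ (Fin N)) ((σ + 1) * ε + R) := by
        rintro ⟨q, p⟩ ⟨hq1, hq2, hq3⟩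
        have hq1' : q ∈ closedBall (0 : ℝ × EuclideanSpace ℝ (Fin N)) R :=
          hR ⟨hq1, hq2⟩
        refine ⟨hq1', ?_⟩
        have hτ : 0 ≤ q.1 := hK₁sub q hq1
        have hexp : Real.exp (-q.1) - Real.exp (-s₁) ≤ 1 := by
          have := Real.exp_le_one_iff.mpr (by linarith : -q.1 ≤ 0)
          have := Real.exp_pos (-s₁)
          linarith
        have hsn : snormS σ (p - q) ≤ ε := by
          calc snormS σ (p - q) ≤ ε * (Real.exp (-q.1) - Real.exp (-s₁)) := hq3
            _ ≤ ε * 1 := by nlinarith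
            _ = ε := mul_one ε
        have h1 := abs_fst_le_snormS hσ (p - q)
        have h2 := norm_snd_le_snormS hσ (p - q)
        have hs0 := snormS_nonneg σ (p - q)
        have hdist : dist p q ≤ (σ + 1) * ε := by
          rw [Prod.dist_eq, sup_le_iff]
          constructor
          · rw [Real.dist_eq]
            calc |p.1 - q.1| = |(p - q).1| := rfl
              _ ≤ σ * snormS σ (p - q) := h1
              _ ≤ (σ + 1) * ε := by nlinarith
          · rw [dist_eq_norm]
            calc ‖p.2 - q.2‖ = ‖(p - q).2‖ := rfl
              _ ≤ snormS σ (p - q) := h2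
              _ ≤ (σ + 1) * ε := by nlinarith
        have := Metric.mem_closedBall.mp hq1'
        rw [Metric.mem_closedBall]
        calc dist p 0 ≤ dist p q + dist q 0 := dist_triangle _ _ _
          _ ≤ (σ + 1) * ε + R := by linarith
      have : D ⊆ (closedBall (0 : ℝ × EuclideanSpace ℝ (Fin N)) R) ×ˢ
          (closedBall (0 : ℝ × EuclideanSpace ℝ (Fin N)) ((σ + 1) * ε + R)) := by
        intro qp hqp
        exact Set.mem_prod.mpr (key qp hqp)
      exact ((Metric.isBounded_closedBall).prod (Metric.isBounded_closedBall)).subset this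
    have hDcpt : IsCompact D := Metric.isCompact_of_isClosed_isBounded hDcl hDbd
    have hKeq : K = {p : ℝ × EuclideanSpace ℝ (Fin N) | 0 ≤ p.1} ∩ (Prod.snd '' D) := by
      rw [hK]
      ext p
      constructor
      · rintro ⟨h0, q, hq1, hq2, hq3⟩
        exact ⟨h0, (q, p), ⟨hq1, hq2, hq3⟩, rfl⟩
      · rintro ⟨h0, ⟨q, p'⟩, ⟨hq1, hq2, hq3⟩, rfl⟩
        exact ⟨h0, q, hq1, hq2, hq3⟩
    rw [hKeq]
    exact (isClosed_le continuous_const continuous_fst).inter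
      (hDcpt.image continuous_snd).isClosed
  -- Part 2: slices agree
  have part2 : {x | (s₁, x) ∈ K} = {x | (s₁, x) ∈ K₁} := by
    ext x
    simp only [Set.mem_setOf_eq]
    constructor
    · intro hx
      rw [hK] at hx
      obtain ⟨h0, q, hq1, hq2, hq3⟩ := hx
      have hτ : 0 ≤ q.1 := hK₁sub q hq1
      have hexp : Real.exp (-q.1) - Real.exp (-s₁) ≤ s₁ - q.1 :=
        exp_sub_exp_le q.1 s₁ hq2 hτ
      have h1 := abs_fst_le_snormS hσ ((s₁, x) - q)
      have habs : |((s₁, x) - q).1| = s₁ - q.1 := by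
        simp only [Prod.fst_sub]
        exact abs_of_nonneg (by linarith)
      have hchain : s₁ - q.1 ≤ σ * ε * (s₁ - q.1) := by
        have := snormS_nonneg σ ((s₁, x) - q)
        nlinarith [hq3.trans (by nlinarith : ε * (Real.exp (-q.1) - Real.exp (-s₁)) ≤
          ε * (s₁ - q.1))]
      have hq1s : q.1 = s₁ := by nlinarith
      have hzero : snormS σ ((s₁, x) - q) = 0 := by
        have : ε * (Real.exp (-q.1) - Real.exp (-s₁)) = 0 := by rw [hq1s]; ring
        have := hq3.trans_eq this
        exact le_antisymm this (snormS_nonneg σ _)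
      have := snormS_eq_zero hσ hzero
      have hqe : (s₁, x) = q := by
        have := sub_eq_zero.mp this
        exact this
      rw [hqe]; exact hq1
    · exact hsliceK x
  -- distance minimizer for (s₁, y)
  obtain ⟨q', hq'L, hq'eq⟩ := distS_exists_min hσ hLne hLcl (s₁, y)
  rw [hyd] at hq'eq
  -- lower bound for all pairs
  have lower : ∀ p ∈ K, ∀ q'' ∈ L, ε * Real.exp (-s₁) ≤ snormS σ (p - q'') := by
    intro p hp q'' hq''
    rw [hK] at hp
    obtain ⟨h0, q, hq1, hq2, hq3⟩ := hp
    have hdq : ε * Real.exp (-q.1) ≤ snormS σ (q'' - q) :=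
      (ha q hq1 hq2).trans (distS_le σ hq'' q)
    have htri : snormS σ (q'' - q) ≤ snormS σ (q'' - p) + snormS σ (p - q) := by
      calc snormS σ (q'' - q) = snormS σ ((q'' - p) + (p - q)) := by rw [sub_add_sub_cancel]
        _ ≤ _ := snormS_add_le hσ _ _
    have hcomm : snormS σ (q'' - p) = snormS σ (p - q'') := snormS_sub_comm σ _ _
    nlinarith
  -- Part 3
  have part3 : eS σ K L = ε * Real.exp (-s₁) := by
    apply le_antisymm
    · have hbdd : BddBelow {r | ∃ p ∈ K, ∃ q ∈ L, r = snormS σ (p - q)} := by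
        refine ⟨0, ?_⟩
        rintro r ⟨p, -, q, -, rfl⟩
        exact snormS_nonneg σ _
      exact csInf_le hbdd ⟨(s₁, y), hyK, q', hq'L, by rw [snormS_sub_comm, hq'eq]⟩
    · refine le_csInf ⟨snormS σ ((s₁, y) - q'), (s₁, y), hyK, q', hq'L, rfl⟩ ?_
      rintro r ⟨p, hp, q'', hq'', rfl⟩
      exact lower p hp q'' hq''
  exact ⟨part1, part2, part3, y, hyK, q', hq'L, by rw [snormS_sub_comm, hq'eq]⟩
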